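/- arXiv:1811.04618 — 2 statements merged into one kernel-verified Lean document; each statement's English description precedes it below -/
import Mathlib

section
/- The property of being ℵ₀-bounded passes to subgroups: if G is a topological group in which every nonempty open set is countably syndetic, then every subgroup H of G (with the subspace topology) has the same property. -/
open scoped Pointwise

theorem aleph0_bounded_subgroup {G : Type*} [Group G] [TopologicalSpace G] [IsTopologicalGroup G]
    (hG : ∀ U : Set G, IsOpen U → U.Nonempty → ∃ T : Set G, T.Countable ∧ T * U = Set.univ)
    (H : Subgroup G) (V : Set H) (hV : IsOpen V) (hne : V.Nonempty) :
    ∃ T : Set H, T.Countable ∧ T * V = Set.univ := by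
  classical
  obtain ⟨v, hv⟩ := hne
  rw [isOpen_induced_iff] at hV
  obtain ⟨W, hW, rfl⟩ := hV
  have hvW : (v : G) ∈ W := hv
  have hWnhds : (v : G)⁻¹ • W ∈ nhds (1 : G) := by
    have hop : IsOpen ((v : G)⁻¹ • W) := hW.smul _
    refine hop.mem_nhds ?_
    exact ⟨(v : G), hvW, by simp [smul_eq_mul]⟩
  obtain ⟨P₀, hP₀open, hP₀one, hP₀⟩ := exists_open_nhds_one_mul_subset hWnhds
  set P : Set G := P₀ ∩ P₀⁻¹ with hPdef
  have hPopen : IsOpen P := hP₀open.inter hP₀open.inv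
  have hPone : (1 : G) ∈ P := ⟨hP₀one, by simpa using hP₀one⟩
  have hPsub : ∀ a ∈ P, ∀ b ∈ P, a⁻¹ * b ∈ (v : G)⁻¹ • W := by
    intro a ha b hb
    exact hP₀ (Set.mul_mem_mul (by simpa using ha.2) hb.1)
  obtain ⟨S, hScount, hSP⟩ := hG P hPopen ⟨1, hPone⟩
  let f : G → H := fun s =>
    if hq : ∃ h' : H, ∃ p ∈ P, (h' : G) = s * p then hq.choose else 1
  have hfs : ∀ s, (∃ h' : H, ∃ p ∈ P, (h' : G) = s * p) →
      ∃ p ∈ P, ((f s : H) : G) = s * p := by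
    intro s hq
    simp only [f, dif_pos hq]
    exact hq.choose_spec
  refine ⟨(fun s => f s * v⁻¹) '' S, hScount.image _, ?_⟩
  ext h
  simp only [Set.mem_univ, iff_true]
  have hh : (h : G) ∈ S * P := by rw [hSP]; exact Set.mem_univ _
  obtain ⟨s, hsS, p, hpP, hsp⟩ := hh
  have hq : ∃ h' : H, ∃ p ∈ P, (h' : G) = s * p := ⟨h, p, hpP, hsp.symm⟩
  obtain ⟨p', hp'P, hfseq⟩ := hfs s hq
  set u : H := v * (f s)⁻¹ * h with hu
  have huW : (u : G) ∈ W := by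
    have hmem : p'⁻¹ * p ∈ (v : G)⁻¹ • W := hPsub p' hp'P p hpP
    rw [Set.mem_inv_smul_set_iff] at hmem
    have : (u : G) = (v : G) * (p'⁻¹ * p) := by
      push_cast [hu]
      rw [hfseq, ← hsp]
      group
    rw [this]
    simpa using hmem
  exact ⟨f s * v⁻¹, Set.mem_image_of_mem _ hsS, u, huW, by rw [hu]; group⟩
end

section
/- A metrizable topological group is SIN if and only if it admits a compatible bi-invariant metric (a metric inducing the topology with d(gx, gy) = d(x, y) = d(xg, yg) for all g, x, y). -/
/-- `G` is SIN: the identity has a neighborhood basis of conjugation-invariant open sets. -/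
def IsSIN (G : Type*) [Group G] [TopologicalSpace G] : Prop :=
  ∀ U ∈ nhds (1 : G), ∃ V ∈ nhds (1 : G),
    IsOpen V ∧ V ⊆ U ∧ ∀ g : G, (fun x => g * x * g⁻¹) '' V = V

open Set Function Filter List NNReal Pointwise

section Aux

variable {G : Type*} [Group G] [TopologicalSpace G] [IsTopologicalGroup G]

private lemma conj_iff_of_image {V : Set G} (hV : ∀ g : G, (fun x => g * x * g⁻¹) '' V = V)
    (h a : G) : a ∈ V ↔ h⁻¹ * a * h ∈ V := by
  constructor
  · intro ha
    have h1 : h⁻¹ * a * h⁻¹⁻¹ ∈ (fun x => h⁻¹ * x * h⁻¹⁻¹) '' V := mem_image_of_mem _ ha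
    rw [hV h⁻¹] at h1
    rwa [inv_inv] at h1
  · intro ha
    have h1 : h * (h⁻¹ * a * h) * h⁻¹ ∈ (fun x => h * x * h⁻¹) '' V := mem_image_of_mem _ ha
    rw [hV h] at h1
    have he : h * (h⁻¹ * a * h) * h⁻¹ = a := by group
    rwa [he] at h1

private lemma cube_subset {S : Set G} (hS : S ∈ nhds (1 : G)) :
    ∃ W ∈ nhds (1 : G), W * W * W ⊆ S := by
  obtain ⟨V, hVo, hV1, hVV⟩ := exists_open_nhds_one_mul_subset hS
  obtain ⟨W, hWo, hW1, hWW⟩ := exists_open_nhds_one_mul_subset (hVo.mem_nhds hV1)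
  have hWV : W ⊆ V := fun w hw => by
    have := hWW (Set.mul_mem_mul hw hW1); rwa [mul_one] at this
  exact ⟨W, hWo.mem_nhds hW1, (Set.mul_subset_mul hWW hWV).trans hVV⟩

private lemma sin_shrink (hSIN : IsSIN G) {S : Set G} (hS : S ∈ nhds (1 : G)) :
    ∃ V : Set G, V ∈ nhds (1 : G) ∧ IsOpen V ∧ (∀ a ∈ V, a⁻¹ ∈ V) ∧
      (∀ h a : G, a ∈ V ↔ h⁻¹ * a * h ∈ V) ∧ V ⊆ S ∧ V * V * V ⊆ S := by
  obtain ⟨W, hW, hWS⟩ := cube_subset hS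
  obtain ⟨V₀, hV₀n, hV₀o, hV₀sub, hV₀conj⟩ := hSIN (W ∩ S) (inter_mem hW hS)
  have hc := conj_iff_of_image hV₀conj
  have hV₀inv : (V₀⁻¹ : Set G) ∈ nhds (1 : G) := by
    have h := continuous_inv.tendsto (1 : G)
    rw [inv_one] at h
    have := h hV₀n
    simpa only [Filter.mem_map, Set.inv_preimage] using this
  refine ⟨V₀ ∩ V₀⁻¹, inter_mem hV₀n hV₀inv, hV₀o.inter hV₀o.inv, ?_, ?_, ?_, ?_⟩
  · rintro a ⟨h1, h2⟩
    exact ⟨by simpa [Set.mem_inv] using h2, by simpa [Set.mem_inv] using h1⟩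
  · intro h a
    have hinv : (h⁻¹ * a * h)⁻¹ = h⁻¹ * a⁻¹ * h := by group
    simp only [Set.mem_inter_iff, Set.mem_inv, hinv]
    rw [← hc h a, ← hc h a⁻¹]
  · exact (Set.inter_subset_left).trans (hV₀sub.trans Set.inter_subset_right)
  · refine le_trans ?_ hWS
    have hsub : V₀ ∩ V₀⁻¹ ⊆ W := Set.inter_subset_left.trans (hV₀sub.trans Set.inter_subset_left)
    exact Set.mul_subset_mul (Set.mul_subset_mul hsub hsub) hsub

end Aux

theorem metrizable_isSIN_iff_biInvariant_metric {G : Type*} [Group G] [TopologicalSpace G]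
    [IsTopologicalGroup G] [TopologicalSpace.MetrizableSpace G] :
    IsSIN G ↔ ∃ m : MetricSpace G,
      m.toUniformSpace.toTopologicalSpace = (inferInstance : TopologicalSpace G) ∧
      ∀ g x y : G, m.dist (g * x) (g * y) = m.dist x y ∧ m.dist (x * g) (y * g) = m.dist x y := by
  classical
  constructor
  · intro hSIN
    obtain ⟨B, hB⟩ := (nhds (1 : G)).exists_antitone_basis
    have hBmem : ∀ n, B n ∈ nhds (1 : G) := fun n => hB.toHasBasis.mem_of_mem trivial
    -- a totalized choice function
    have key : ∀ S : Set G, ∃ V : Set G, S ∈ nhds (1 : G) →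
        (V ∈ nhds (1 : G) ∧ IsOpen V ∧ (∀ a ∈ V, a⁻¹ ∈ V) ∧
          (∀ h a : G, a ∈ V ↔ h⁻¹ * a * h ∈ V) ∧ V ⊆ S ∧ V * V * V ⊆ S) := by
      intro S
      by_cases hS : S ∈ nhds (1 : G)
      · obtain ⟨V, h⟩ := sin_shrink hSIN hS
        exact ⟨V, fun _ => h⟩
      · exact ⟨∅, fun h => absurd h hS⟩
    choose F hF using key
    set U : ℕ → Set G := fun n => Nat.rec (F (B 0)) (fun n Un => F (B (n + 1) ∩ Un)) n with hUdef
    have hUnhds : ∀ n, U n ∈ nhds (1 : G) := by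
      intro n
      induction n with
      | zero => exact (hF (B 0) (hBmem 0)).1
      | succ n ih => exact (hF (B (n + 1) ∩ U n) (inter_mem (hBmem _) ih)).1
    have hUspec : ∀ n, IsOpen (U n) ∧ (∀ a ∈ U n, a⁻¹ ∈ U n) ∧
        (∀ h a : G, a ∈ U n ↔ h⁻¹ * a * h ∈ U n) := by
      intro n
      cases n with
      | zero =>
        have h := hF (B 0) (hBmem 0); exact ⟨h.2.1, h.2.2.1, h.2.2.2.1⟩
      | succ n =>
        have h := hF (B (n + 1) ∩ U n) (inter_mem (hBmem _) (hUnhds n))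
        exact ⟨h.2.1, h.2.2.1, h.2.2.2.1⟩
    have hUB : ∀ n, U n ⊆ B n := by
      intro n
      cases n with
      | zero => exact (hF (B 0) (hBmem 0)).2.2.2.2.1
      | succ n =>
        exact ((hF (B (n + 1) ∩ U n) (inter_mem (hBmem _) (hUnhds n))).2.2.2.2.1).trans
          Set.inter_subset_left
    have hUcube : ∀ n, U (n + 1) * U (n + 1) * U (n + 1) ⊆ U n := fun n =>
      ((hF (B (n + 1) ∩ U n) (inter_mem (hBmem _) (hUnhds n))).2.2.2.2.2).trans
        Set.inter_subset_right
    have hUsucc : ∀ n, U (n + 1) ⊆ U n := fun n =>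
      ((hF (B (n + 1) ∩ U n) (inter_mem (hBmem _) (hUnhds n))).2.2.2.2.1).trans
        Set.inter_subset_right
    have hUanti : ∀ {m n : ℕ}, m ≤ n → U n ⊆ U m := by
      intro m n h
      induction h with
      | refl => exact subset_rfl
      | step _ ih => exact le_trans (hUsucc _) ih
    have hUbasis : ∀ S ∈ nhds (1 : G), ∃ n, U n ⊆ S := by
      intro S hS
      obtain ⟨n, -, hn⟩ := hB.toHasBasis.mem_iff.1 hS
      exact ⟨n, (hUB n).trans hn⟩
    have hUsymm : ∀ n (a : G), a ∈ U n ↔ a⁻¹ ∈ U n := by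
      intro n a
      constructor
      · exact (hUspec n).2.1 a
      · intro h; simpa using (hUspec n).2.1 a⁻¹ h
    -- the pre-distance
    set ν : G → ℝ≥0 := fun a => if h : ∃ n, a ∉ U n then (1 / 2) ^ Nat.find h else 0 with hν
    have hνcongr : ∀ a b : G, (∀ n, a ∈ U n ↔ b ∈ U n) → ν a = ν b := by
      intro a b hab
      by_cases H : ∃ n, a ∉ U n
      · obtain ⟨n, hn⟩ := H
        have H' : ∃ n, b ∉ U n := ⟨n, fun hb => hn ((hab n).2 hb)⟩
        simp only [ν]
        rw [dif_pos ⟨n, hn⟩, dif_pos H']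
        congr 1
        exact _root_.le_antisymm
          (Nat.find_mono fun k hk ha => hk ((hab k).1 ha))
          (Nat.find_mono fun k hk hb => hk ((hab k).2 hb))
      · have H' : ¬∃ n, b ∉ U n := by
          rintro ⟨n, hn⟩; exact H ⟨n, fun ha => hn ((hab n).1 ha)⟩
        simp only [ν]
        rw [dif_neg H, dif_neg H']
    set d : G → G → ℝ≥0 := fun x y => ν (x⁻¹ * y) with hd
    have hd_self : ∀ x, d x x = 0 := by
      intro x
      have : ¬∃ n, x⁻¹ * x ∉ U n := by
        push_neg
        intro n
        simpa using mem_of_mem_nhds (hUnhds n)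
      simp only [d, ν]
      rw [dif_neg this]
    have hd_symm : ∀ x y, d x y = d y x := by
      intro x y
      refine hνcongr _ _ fun n => ?_
      rw [hUsymm n (x⁻¹ * y)]
      simp [mul_inv_rev]
    have hd_conj : ∀ g h x y : G, d (g * x * h) (g * y * h) = d x y := by
      intro g h x y
      have hxy : (g * x * h)⁻¹ * (g * y * h) = h⁻¹ * (x⁻¹ * y) * h := by group
      simp only [d]
      rw [hxy]
      exact hνcongr _ _ fun n => ((hUspec n).2.2 h (x⁻¹ * y)).symm
    set I := PseudoMetricSpace.ofPreNNDist d hd_self hd_symm with hI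
    have hdist_le : ∀ x y : G, @dist G I.toDist x y ≤ d x y :=
      PseudoMetricSpace.dist_ofPreNNDist_le d hd_self hd_symm
    have hr : (1 / 2 : ℝ≥0) ∈ Set.Ioo (0 : ℝ≥0) 1 :=
      ⟨half_pos one_pos, NNReal.half_lt_self one_ne_zero⟩
    have hle_d : ∀ {x y : G} {n : ℕ}, (1 / 2 : ℝ≥0) ^ n ≤ d x y ↔ x⁻¹ * y ∉ U n := by
      intro x y n
      simp only [d, ν]
      split_ifs with h
      · rw [(pow_right_strictAnti₀ hr.1 hr.2).le_iff_ge, Nat.find_le_iff]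
        exact ⟨fun ⟨m, hmn, hm⟩ hn => hm (hUanti hmn hn), fun h => ⟨n, le_rfl, h⟩⟩
      · push_neg at h
        simp only [h n, not_true, (pow_pos hr.1 _).not_ge]
    have hd_le : ∀ x y : G, ↑(d x y) ≤ 2 * @dist G I.toDist x y := by
      refine PseudoMetricSpace.le_two_mul_dist_ofPreNNDist _ _ _ fun x₁ x₂ x₃ x₄ => ?_
      by_cases H : ∃ n, x₁⁻¹ * x₄ ∉ U n
      · have hd14 : d x₁ x₄ = (1 / 2) ^ Nat.find H := by
          simp only [d, ν]; rw [dif_pos H]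
        rw [hd14, ← div_le_iff₀' zero_lt_two, ← mul_one_div (_ ^ _), ← pow_succ]
        simp only [le_max_iff, hle_d, ← not_and_or]
        rintro ⟨h₁₂, h₂₃, h₃₄⟩
        refine Nat.find_spec H ?_
        have hmem := hUcube (Nat.find H)
          (Set.mul_mem_mul (Set.mul_mem_mul h₁₂ h₂₃) h₃₄)
        have heq : x₁⁻¹ * x₂ * (x₂⁻¹ * x₃) * (x₃⁻¹ * x₄) = x₁⁻¹ * x₄ := by group
        rwa [heq] at hmem
      · have hd14 : d x₁ x₄ = 0 := by simp only [d, ν]; rw [dif_neg H]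
        rw [hd14]; exact zero_le
    -- invariance of the distance
    have hdist_inv : ∀ g h x y : G, @dist G I.toDist (g * x * h) (g * y * h) =
        @dist G I.toDist x y := by
      intro g h x y
      have key : ∀ (g h x y : G) (l : List G),
          (List.zipWith d ((g * x * h) :: (l.map fun a : G => g * a * h))
            ((l.map fun a : G => g * a * h) ++ [g * y * h])).sum =
          (List.zipWith d (x :: l) (l ++ [y])).sum := by
        intro g h x y l
        have h1 : (g * x * h) :: List.map (fun a : G => g * a * h) l =
            List.map (fun a : G => g * a * h) (x :: l) := rfl
        have h2 : List.map (fun a : G => g * a * h) l ++ [g * y * h] =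
            List.map (fun a : G => g * a * h) (l ++ [y]) := by simp
        rw [h1, h2, List.zipWith_map]
        have h3 : (fun a b : G => d (g * a * h) (g * b * h)) = d := by
          funext a b; exact hd_conj g h a b
        rw [h3]
      rw [PseudoMetricSpace.dist_ofPreNNDist, PseudoMetricSpace.dist_ofPreNNDist]
      refine congrArg _ (_root_.le_antisymm ?_ ?_)
      · refine le_ciInf fun l => ?_
        have := ciInf_le (f := fun l : List G =>
            (List.zipWith d ((g * x * h) :: l) (l ++ [g * y * h])).sum)
          (OrderBot.bddBelow _) (l.map fun a : G => g * a * h)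
        rwa [key g h x y l] at this
      · refine le_ciInf fun l => ?_
        have hk := key g⁻¹ h⁻¹ (g * x * h) (g * y * h) l
        have e1 : g⁻¹ * (g * x * h) * h⁻¹ = x := by group
        have e2 : g⁻¹ * (g * y * h) * h⁻¹ = y := by group
        rw [e1, e2] at hk
        have := ciInf_le (f := fun l : List G =>
            (List.zipWith d (x :: l) (l ++ [y])).sum)
          (OrderBot.bddBelow _) (l.map fun a : G => g⁻¹ * a * h⁻¹)
        rwa [hk] at this
    have hdl : ∀ g a b : G, @dist G I.toDist (g * a) (g * b) = @dist G I.toDist a b := by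
      intro g a b; simpa using hdist_inv g 1 a b
    have hdr : ∀ g a b : G, @dist G I.toDist (a * g) (b * g) = @dist G I.toDist a b := by
      intro g a b; simpa using hdist_inv 1 g a b
    -- separation
    have heq0 : ∀ x y : G, @dist G I.toDist x y = 0 → x = y := by
      intro x y h0
      have hd0 : d x y = 0 := by
        have h1 := hd_le x y
        rw [h0, mul_zero] at h1
        exact _root_.le_antisymm (by exact_mod_cast h1) zero_le
      have hall : ∀ n, x⁻¹ * y ∈ U n := by
        intro n
        by_contra hn
        have h2 : (1 / 2 : ℝ≥0) ^ n ≤ d x y := hle_d.2 hn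
        rw [hd0] at h2
        exact absurd h2 (pow_pos hr.1 n).not_ge
      have hxy : x⁻¹ * y = 1 := by
        by_contra hne
        have hopen : ({x⁻¹ * y}ᶜ : Set G) ∈ nhds (1 : G) :=
          isOpen_compl_singleton.mem_nhds (by simpa using Ne.symm hne)
        obtain ⟨n, hn⟩ := hUbasis _ hopen
        exact hn (hall n) rfl
      exact (inv_mul_eq_one.1 hxy)
    -- balls vs U n
    have hballU : ∀ n : ℕ, @Metric.ball G I 1 ((1 / 2 : ℝ) ^ (n + 1)) ⊆ U n := by
      intro n y hy
      have hy' : @dist G I.toDist y 1 < (1 / 2 : ℝ) ^ (n + 1) := hy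
      have h1 : (↑(d y 1) : ℝ) < (1 / 2 : ℝ) ^ n := by
        calc (↑(d y 1) : ℝ) ≤ 2 * @dist G I.toDist y 1 := hd_le y 1
          _ < 2 * (1 / 2 : ℝ) ^ (n + 1) := by linarith [hy']
          _ = (1 / 2 : ℝ) ^ n := by ring
      have h2 : d y 1 < (1 / 2 : ℝ≥0) ^ n := by
        have hc : (((1 / 2 : ℝ≥0) ^ n : ℝ≥0) : ℝ) = (1 / 2 : ℝ) ^ n := by
          push_cast; ring
        rw [← NNReal.coe_lt_coe, hc]
        exact h1
      have h3 : y⁻¹ * 1 ∈ U n := by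
        by_contra hc
        exact absurd (hle_d.2 hc) h2.not_ge
      rw [mul_one] at h3
      exact (hUsymm n y).2 h3
    have hUball : ∀ n : ℕ, U n ⊆ @Metric.ball G I 1 ((1 / 2 : ℝ) ^ n) := by
      intro n y hy
      have h3 : y⁻¹ * 1 ∈ U n := by rw [mul_one]; exact (hUsymm n y).1 hy
      have h2 : ¬((1 / 2 : ℝ≥0) ^ n ≤ d y 1) := fun hc => (hle_d.1 hc) h3
      push_neg at h2
      have h4 : @dist G I.toDist y 1 < (1 / 2 : ℝ) ^ n := by
        refine lt_of_le_of_lt (hdist_le y 1) ?_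
        have hc : (((1 / 2 : ℝ≥0) ^ n : ℝ≥0) : ℝ) = (1 / 2 : ℝ) ^ n := by
          push_cast; ring
        rw [← NNReal.coe_lt_coe, hc] at h2
        exact h2
      exact h4
    -- 𝓝 1 agree
    have hnhds1 : @nhds G I.toUniformSpace.toTopologicalSpace 1 = nhds (1 : G) := by
      apply _root_.le_antisymm
      · intro S hS
        obtain ⟨n, hn⟩ := hUbasis S hS
        refine Filter.mem_of_superset
          (@Metric.ball_mem_nhds G I 1 _ (by positivity : (0:ℝ) < (1/2:ℝ)^(n+1)))
          ((hballU n).trans hn)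
      · intro S hS
        obtain ⟨ε, hε, hball⟩ := (@Metric.nhds_basis_ball G I 1).mem_iff.1 hS
        obtain ⟨n, hnε⟩ := exists_pow_lt_of_lt_one hε (by norm_num : (1/2:ℝ) < 1)
        refine Filter.mem_of_superset (hUnhds n) ((hUball n).trans ?_)
        refine (Metric.ball_subset_ball hnε.le).trans hball
    -- 𝓝 x agree
    have hnhds : ∀ x : G, @nhds G I.toUniformSpace.toTopologicalSpace x = nhds x := by
      intro x
      have himg : ∀ ε : ℝ, (fun y => x * y) '' (@Metric.ball G I 1 ε) =
          @Metric.ball G I x ε := by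
        intro ε
        ext y
        simp only [Set.mem_image]
        constructor
        · rintro ⟨a, ha, rfl⟩
          have : @dist G I.toDist (x * a) x < ε := by
            have h1 : @dist G I.toDist (x * a) (x * 1) = @dist G I.toDist a 1 := hdl x a 1
            rw [mul_one] at h1
            rw [h1]; exact ha
          exact this
        · intro hy
          refine ⟨x⁻¹ * y, ?_, by group⟩
          have h1 : @dist G I.toDist (x * (x⁻¹ * y)) (x * 1) =
              @dist G I.toDist (x⁻¹ * y) 1 := hdl x _ 1
          rw [mul_one] at h1
          have h2 : x * (x⁻¹ * y) = y := by group
          rw [h2] at h1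
          show @dist G I.toDist (x⁻¹ * y) 1 < ε
          rw [← h1]; exact hy
      have hbasis1 : (@nhds G I.toUniformSpace.toTopologicalSpace x).HasBasis
          (fun ε : ℝ => 0 < ε) (fun ε => @Metric.ball G I x ε) := @Metric.nhds_basis_ball G I x
      have hbasis2 : (Filter.map (fun y => x * y)
          (@nhds G I.toUniformSpace.toTopologicalSpace 1)).HasBasis
          (fun ε : ℝ => 0 < ε) (fun ε => @Metric.ball G I x ε) := by
        have := (@Metric.nhds_basis_ball G I 1).map (fun y => x * y)
        exact this.congr (fun _ => Iff.rfl) fun ε _ => himg ε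
      rw [hbasis1.eq_of_same_basis hbasis2, hnhds1, map_mul_left_nhds_one]
    have htop : I.toUniformSpace.toTopologicalSpace = ‹TopologicalSpace G› :=
      TopologicalSpace.ext_nhds hnhds
    refine ⟨{ I with eq_of_dist_eq_zero := fun {x y} h => heq0 x y h }, htop, ?_⟩
    exact fun g x y => ⟨hdl g x y, hdr g x y⟩
  · rintro ⟨m, hm, hinv⟩
    have hm' : m.toUniformSpace.toTopologicalSpace = ‹TopologicalSpace G› := hm
    intro U hU
    rw [← hm'] at hU
    obtain ⟨ε, hε, hball⟩ := (@Metric.nhds_basis_ball G m.toPseudoMetricSpace 1).mem_iff.1 hU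
    have hconj : ∀ gg a : G, m.dist (gg * a * gg⁻¹) 1 = m.dist a 1 := by
      intro gg a
      have h1 : m.dist (gg * (a * gg⁻¹)) (gg * (1 * gg⁻¹)) = m.dist (a * gg⁻¹) (1 * gg⁻¹) :=
        (hinv gg (a * gg⁻¹) (1 * gg⁻¹)).1
      have h2 : m.dist (a * gg⁻¹) (1 * gg⁻¹) = m.dist a 1 := (hinv gg⁻¹ a 1).2
      have h3 : gg * (a * gg⁻¹) = gg * a * gg⁻¹ := by group
      have h4 : gg * (1 * gg⁻¹) = 1 := by group
      rw [h3, h4] at h1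
      rw [h1, h2]
    refine ⟨@Metric.ball G m.toPseudoMetricSpace 1 ε, ?_, ?_, hball, ?_⟩
    · rw [← hm']
      exact @Metric.ball_mem_nhds G m.toPseudoMetricSpace 1 ε hε
    · rw [← hm']
      exact @Metric.isOpen_ball G m.toPseudoMetricSpace 1 ε
    · intro g
      ext y
      simp only [Set.mem_image]
      constructor
      · rintro ⟨a, ha, rfl⟩
        show m.dist (g * a * g⁻¹) 1 < ε
        rw [hconj g a]
        exact ha
      · intro hy
        refine ⟨g⁻¹ * y * g, ?_, by group⟩
        show m.dist (g⁻¹ * y * g) 1 < ε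
        have := hconj g⁻¹ y
        rw [inv_inv] at this
        rw [this]
        exact hy
end
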